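/- arXiv:2006.06338 — 2 statements merged into one kernel-verified Lean document; each statement's English description precedes it below -/
import Mathlib

section
/- Let T(x) = ∑_{i=0}^{r-1} C(ℓ,i) x^i (1-x)^{ℓ-i} for integers 0 < r < ℓ. Then T(0) = 1, the m-th derivative of T at 0 vanishes for m = 1, 2, ..., r-1, and the r-th derivative of T at 0 equals -(ℓ)_r, where (ℓ)_r = ℓ(ℓ-1)···(ℓ-r+1) is the falling factorial. -/
open Polynomial Finset

/-- Coefficient of `(1 - X)^n`. -/
lemma coeff_one_sub_X_pow (n k : ℕ) :
    ((1 - X : ℝ[X]) ^ n).coeff k = (-1) ^ k * (n.choose k : ℝ) := by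
  have h : (1 - X : ℝ[X]) = (-X) + 1 := by ring
  rw [h, add_pow]
  rw [finset_sum_coeff]
  have hterm : ∀ i ∈ Finset.range (n + 1),
      ((-X : ℝ[X]) ^ i * 1 ^ (n - i) * (n.choose i : ℝ[X])).coeff k
        = if i = k then (-1) ^ k * (n.choose k : ℝ) else 0 := by
    intro i _
    have : ((-X : ℝ[X]) ^ i * 1 ^ (n - i) * (n.choose i : ℝ[X]))
        = Polynomial.C ((-1) ^ i * (n.choose i : ℝ)) * X ^ i := by
      rw [map_mul, map_pow, map_neg, map_one, Polynomial.C_eq_natCast]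
      ring
    rw [this, coeff_C_mul, coeff_X_pow]
    by_cases hik : i = k
    · subst hik; simp
    · simp [hik, Ne.symm hik]
  rw [Finset.sum_congr rfl hterm]
  rw [Finset.sum_ite_eq' (Finset.range (n + 1)) k]
  by_cases hk : k ∈ Finset.range (n + 1)
  · simp [hk]
  · rw [if_neg hk]
    rw [Finset.mem_range, not_lt] at hk
    rw [Nat.choose_eq_zero_of_lt (by omega)]
    simp

/-- The key alternating-sum computation. -/
lemma key_sum (ℓ m : ℕ) (hm : m ≤ ℓ) :
    ∑ i ∈ Finset.range (m + 1),
      (ℓ.choose i : ℝ) * ((-1) ^ (m - i) * ((ℓ - i).choose (m - i) : ℝ))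
      = (ℓ.choose m : ℝ) * (-1) ^ m * (if m = 0 then 1 else 0) := by
  have step : ∀ i ∈ Finset.range (m + 1),
      (ℓ.choose i : ℝ) * ((-1) ^ (m - i) * ((ℓ - i).choose (m - i) : ℝ))
        = (ℓ.choose m : ℝ) * ((-1) ^ m * ((-1) ^ i * (m.choose i : ℝ))) := by
    intro i hi
    rw [Finset.mem_range] at hi
    have him : i ≤ m := by omega
    have hmul : ℓ.choose m * m.choose i = ℓ.choose i * (ℓ - i).choose (m - i) :=
      Nat.choose_mul him
    have hsign : ((-1 : ℝ)) ^ (m - i) = (-1) ^ m * (-1) ^ i := by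
      have : ((-1 : ℝ)) ^ (m - i) * (-1) ^ i = (-1) ^ m := by
        rw [← pow_add]; congr 1; omega
      have h2 : ((-1 : ℝ)) ^ i * (-1) ^ i = 1 := by
        rw [← pow_add, ← two_mul, pow_mul]; norm_num
      calc ((-1 : ℝ)) ^ (m - i) = (-1) ^ (m - i) * ((-1) ^ i * (-1) ^ i) := by rw [h2, mul_one]
        _ = ((-1) ^ (m - i) * (-1) ^ i) * (-1) ^ i := by ring
        _ = (-1) ^ m * (-1) ^ i := by rw [this]
    have hc : ((ℓ.choose m : ℝ)) * (m.choose i : ℝ)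
        = (ℓ.choose i : ℝ) * ((ℓ - i).choose (m - i) : ℝ) := by
      exact_mod_cast congrArg (fun n : ℕ => (n : ℝ)) hmul
    calc (ℓ.choose i : ℝ) * ((-1) ^ (m - i) * ((ℓ - i).choose (m - i) : ℝ))
        = ((ℓ.choose i : ℝ) * ((ℓ - i).choose (m - i) : ℝ)) * (-1) ^ (m - i) := by ring
      _ = ((ℓ.choose m : ℝ) * (m.choose i : ℝ)) * ((-1) ^ m * (-1) ^ i) := by
          rw [← hc, hsign]
      _ = (ℓ.choose m : ℝ) * ((-1) ^ m * ((-1) ^ i * (m.choose i : ℝ))) := by ring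
  have hS : ∑ i ∈ Finset.range (m + 1), (-1 : ℝ) ^ i * (m.choose i : ℝ)
      = if m = 0 then 1 else 0 := by
    have h := Int.alternating_sum_range_choose (n := m)
    apply_fun (fun z : ℤ => (z : ℝ)) at h
    push_cast at h
    convert h using 1
  rw [Finset.sum_congr rfl step, ← Finset.mul_sum, ← Finset.mul_sum, hS]
  ring

theorem stmt_1 (r ℓ : ℕ) (hr : 0 < r) (hrl : r < ℓ)
    (T : ℝ → ℝ)
    (hT : ∀ x : ℝ, T x = ∑ i ∈ Finset.range r, (ℓ.choose i : ℝ) * x ^ i * (1 - x) ^ (ℓ - i)) :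
    T 0 = 1 ∧
    (∀ m : ℕ, 1 ≤ m → m ≤ r - 1 → iteratedDeriv m T 0 = 0) ∧
    iteratedDeriv r T 0 = -(ℓ.descFactorial r : ℝ) := by
  set P : ℝ[X] := ∑ i ∈ Finset.range r,
    Polynomial.C (ℓ.choose i : ℝ) * X ^ i * (1 - X) ^ (ℓ - i) with hP
  have hTP : T = fun x => P.eval x := by
    funext x
    rw [hT x, hP, Polynomial.eval_finset_sum]
    apply Finset.sum_congr rfl
    intro i _
    simp
  -- coefficient of P
  have hcoeff : ∀ m : ℕ, m ≤ r →
      P.coeff m = (if m = 0 then 1 else 0) + (if m = r then -(ℓ.choose r : ℝ) else 0) := by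
    intro m hmr
    have hml : m ≤ ℓ := by omega
    have hterm : ∀ i : ℕ,
        (Polynomial.C (ℓ.choose i : ℝ) * X ^ i * (1 - X) ^ (ℓ - i)).coeff m
          = if i ≤ m then (ℓ.choose i : ℝ) * ((-1) ^ (m - i) * ((ℓ - i).choose (m - i) : ℝ))
            else 0 := by
      intro i
      have h1 : Polynomial.C (ℓ.choose i : ℝ) * X ^ i * (1 - X) ^ (ℓ - i)
          = Polynomial.C (ℓ.choose i : ℝ) * ((1 - X) ^ (ℓ - i) * X ^ i) := by ring
      rw [h1, coeff_C_mul, coeff_mul_X_pow']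
      by_cases hi : i ≤ m
      · rw [if_pos hi, if_pos hi, coeff_one_sub_X_pow]
      · rw [if_neg hi, if_neg hi, mul_zero]
    have hsum : P.coeff m = ∑ i ∈ Finset.range r,
        (if i ≤ m then (ℓ.choose i : ℝ) * ((-1) ^ (m - i) * ((ℓ - i).choose (m - i) : ℝ))
          else 0) := by
      rw [hP, finset_sum_coeff]
      exact Finset.sum_congr rfl fun i _ => hterm i
    rcases Nat.lt_or_ge m r with hmr' | hmr'
    · -- m < r : sum over range r of the if equals sum over range (m+1)
      have hsub : Finset.range (m + 1) ⊆ Finset.range r := by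
        intro x hx; rw [Finset.mem_range] at *; omega
      have : P.coeff m = ∑ i ∈ Finset.range (m + 1),
          (ℓ.choose i : ℝ) * ((-1) ^ (m - i) * ((ℓ - i).choose (m - i) : ℝ)) := by
        rw [hsum, ← Finset.sum_subset hsub]
        · apply Finset.sum_congr rfl
          intro i hi
          rw [Finset.mem_range] at hi
          rw [if_pos (by omega)]
        · intro i _ hi
          rw [Finset.mem_range, not_lt] at hi
          rw [if_neg (by omega)]
      rw [this, key_sum ℓ m hml]
      have hmner : m ≠ r := by omega
      by_cases hm0 : m = 0 <;> simp [hm0, hmner, (show ¬ (0 = r) by omega)]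
    · -- m = r
      have hmeq : m = r := by omega
      subst hmeq
      have hfull := key_sum ℓ m hml
      rw [Finset.sum_range_succ] at hfull
      have hlast : (ℓ.choose m : ℝ) * ((-1) ^ (m - m) * ((ℓ - m).choose (m - m) : ℝ))
          = (ℓ.choose m : ℝ) := by simp
      have hsum' : ∑ i ∈ Finset.range m,
          (ℓ.choose i : ℝ) * ((-1) ^ (m - i) * ((ℓ - i).choose (m - i) : ℝ))
          = -(ℓ.choose m : ℝ) := by
        have hm0 : m ≠ 0 := by omega
        rw [if_neg hm0, mul_zero] at hfull
        linarith [hfull, hlast.symm ▸ hfull]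
      have : P.coeff m = ∑ i ∈ Finset.range m,
          (ℓ.choose i : ℝ) * ((-1) ^ (m - i) * ((ℓ - i).choose (m - i) : ℝ)) := by
        rw [hsum]
        apply Finset.sum_congr rfl
        intro i hi
        rw [Finset.mem_range] at hi
        rw [if_pos (by omega)]
      rw [this, hsum']
      have hm0 : m ≠ 0 := by omega
      simp [hm0]
  -- iterated derivatives of a polynomial eval
  have hiter : ∀ (n : ℕ) (p : ℝ[X]),
      iteratedDeriv n (fun x => p.eval x) = fun x => (derivative^[n] p).eval x := by
    intro n
    induction n with
    | zero => intro p; simp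
    | succ n ih =>
        intro p
        rw [iteratedDeriv_succ', Function.iterate_succ_apply]
        have : deriv (fun x => p.eval x) = fun x => (derivative p).eval x := by
          funext x; exact Polynomial.deriv p
        rw [this, ih]
  have hID : ∀ m : ℕ, iteratedDeriv m T 0 = (m.factorial : ℝ) * P.coeff m := by
    intro m
    rw [hTP, hiter m P]
    show ((⇑Polynomial.derivative)^[m] P).eval 0 = _
    rw [← coeff_zero_eq_eval_zero, Polynomial.coeff_iterate_derivative]
    rw [zero_add, Nat.descFactorial_self]
    simp [nsmul_eq_mul]
  refine ⟨?_, ?_, ?_⟩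
  · rw [hTP]
    show P.eval 0 = 1
    rw [← coeff_zero_eq_eval_zero, hcoeff 0 (by omega)]
    have h0r : (0 : ℕ) ≠ r := by omega
    simp [h0r]
  · intro m hm1 hm2
    rw [hID m, hcoeff m (by omega)]
    have hm0 : m ≠ 0 := by omega
    have hmr : m ≠ r := by omega
    simp [hm0, hmr]
  · rw [hID r, hcoeff r le_rfl]
    have hr0 : r ≠ 0 := by omega
    rw [if_neg hr0, if_pos rfl, zero_add]
    rw [Nat.descFactorial_eq_factorial_mul_choose]
    push_cast
    ring
end

section
/- Let r, ℓ be integers with 2 ≤ r and 2r < ℓ, and let T(x) = ∑_{i=0}^{r-1} C(ℓ,i) x^i (1-x)^{ℓ-i}. For any ξ ∈ (0,1) with ℓξ < 1, the (r+1)-st derivative of T at ξ satisfies |T^{(r+1)}(ξ)| ≤ ℓ^{r+1} · 2^r. -/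
open Polynomial Finset

-- iterated derivative of a polynomial evaluation
lemma polyIterDeriv (p : ℝ[X]) (n : ℕ) :
    iteratedDeriv n (fun y : ℝ => p.eval y) = fun x => (Polynomial.derivative^[n] p).eval x := by
  induction n generalizing p with
  | zero => simp
  | succ n ih =>
    rw [iteratedDeriv_succ']
    have : deriv (fun y : ℝ => p.eval y) = fun y => (Polynomial.derivative p).eval y := by
      funext y; exact Polynomial.deriv (p := p)
    rw [this, ih, Function.iterate_succ_apply]

lemma iterDerivPow (n k : ℕ) (x : ℝ) :
    iteratedDeriv k (fun y : ℝ => y ^ n) x = (n.descFactorial k : ℝ) * x ^ (n - k) := by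
  have h : (fun y : ℝ => y ^ n) = fun y : ℝ => (X ^ n : ℝ[X]).eval y := by
    funext y; simp
  rw [h, polyIterDeriv, Polynomial.iterate_derivative_X_pow_eq_smul]
  simp [mul_comm]

lemma iterDerivOneSubPow (n k : ℕ) (x : ℝ) :
    |iteratedDeriv k (fun y : ℝ => (1 - y) ^ n) x| = (n.descFactorial k : ℝ) * |1 - x| ^ (n - k) := by
  have e1 : (fun y : ℝ => (1 - y) ^ n) = (fun y : ℝ => (1 + -y) ^ n) := by
    funext y; rw [sub_eq_add_neg]
  have h1 : iteratedDeriv k (fun y : ℝ => (1 + -y) ^ n) x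
      = (-1:ℝ)^k • iteratedDeriv k (fun u : ℝ => (1 + u)^n) (-x) :=
    iteratedDeriv_comp_neg k (fun u : ℝ => (1 + u)^n) x
  have h2 : iteratedDeriv k (fun u : ℝ => (1 + u)^n) (-x)
      = iteratedDeriv k (fun w : ℝ => w ^ n) (1 + -x) :=
    congrFun (iteratedDeriv_comp_const_add k (fun w : ℝ => w ^ n) 1) (-x)
  rw [e1, h1, h2, iterDerivPow, smul_eq_mul, abs_mul, abs_mul, abs_pow, abs_neg, abs_one,
    one_pow, one_mul, Nat.abs_cast, abs_pow, ← sub_eq_add_neg]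

lemma telescope (ℓ : ℕ) (s : ℕ) :
    Polynomial.derivative (∑ i ∈ range (s + 1), bernsteinPolynomial ℝ ℓ i) =
      -(ℓ : ℝ[X]) * bernsteinPolynomial ℝ (ℓ - 1) s := by
  induction s with
  | zero =>
    simp [bernsteinPolynomial.derivative_zero]
  | succ s ih =>
    rw [Finset.sum_range_succ, map_add, ih, bernsteinPolynomial.derivative_succ]
    ring

lemma mulConstIterDeriv (n : ℕ) (c : ℝ) (f : ℝ → ℝ) (hf : ContDiff ℝ n f) (x : ℝ) :
    iteratedDeriv n (fun z => c * f z) x = c * iteratedDeriv n f x := by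
  simp_rw [← iteratedDerivWithin_univ]
  exact iteratedDerivWithin_const_mul (Set.mem_univ x) uniqueDiffOn_univ c hf.contDiffWithinAt

theorem stmt_2 (r ℓ : ℕ) (hr : 2 ≤ r) (hrl : 2 * r < ℓ)
    (T : ℝ → ℝ)
    (hT : ∀ x : ℝ, T x = ∑ i ∈ Finset.range r, (ℓ.choose i : ℝ) * x ^ i * (1 - x) ^ (ℓ - i))
    (ξ : ℝ) (hξ0 : 0 < ξ) (hξ1 : ξ < 1) (hℓξ : (ℓ : ℝ) * ξ < 1) :
    |iteratedDeriv (r + 1) T ξ| ≤ (ℓ : ℝ) ^ (r + 1) * 2 ^ r := by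
  -- T is the evaluation of the Bernstein partial sum
  set P : ℝ[X] := ∑ i ∈ range r, bernsteinPolynomial ℝ ℓ i with hP
  have hTP : T = fun x => P.eval x := by
    funext x
    rw [hT, hP, Polynomial.eval_finset_sum]
    refine Finset.sum_congr rfl fun i _ => ?_
    simp [bernsteinPolynomial]
  -- derivative of P
  obtain ⟨s, rfl⟩ : ∃ s, r = s + 1 := ⟨r - 1, by omega⟩
  have hderivP : Polynomial.derivative P =
      -(ℓ : ℝ[X]) * bernsteinPolynomial ℝ (ℓ - 1) s := telescope ℓ s
  -- deriv T
  set c : ℝ := -((ℓ : ℝ) * ((ℓ - 1).choose s)) with hc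
  set f : ℝ → ℝ := fun x => x ^ s with hf
  set g : ℝ → ℝ := fun x => (1 - x) ^ (ℓ - 1 - s) with hg
  have hderivT : deriv T = fun x => c * (f x * g x) := by
    funext x
    rw [hTP]
    rw [show deriv (fun x => P.eval x) x = (Polynomial.derivative P).eval x from Polynomial.deriv (p := P)]
    rw [hderivP]
    simp [bernsteinPolynomial, hc, hf, hg]
    ring
  have hfg : ContDiff ℝ ((s+1 : ℕ) : ℕ∞) fun x => f x * g x :=
    ((contDiff_id.pow s).mul ((contDiff_const.sub contDiff_id).pow (ℓ - 1 - s)))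
  rw [iteratedDeriv_succ', hderivT, mulConstIterDeriv _ _ _ hfg, abs_mul]
  -- Leibniz bound
  have leib : |iteratedDeriv (s + 1) (fun x => f x * g x) ξ| ≤
      ∑ i ∈ range (s + 2), ((s + 1).choose i : ℝ) *
        |iteratedDeriv i f ξ| * |iteratedDeriv (s + 1 - i) g ξ| := by
    have := norm_iteratedFDeriv_mul_le (𝕜 := ℝ) (A := ℝ)
      (f := f) (g := g) (N := ((s+1:ℕ) : ℕ∞))
      (contDiff_id.pow s) ((contDiff_const.sub contDiff_id).pow (ℓ - 1 - s)) ξ (le_refl _)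
    simpa [norm_iteratedFDeriv_eq_norm_iteratedDeriv, Real.norm_eq_abs] using this
  -- bound each term
  have hone : |1 - ξ| ≤ 1 := by rw [abs_of_nonneg (by linarith)]; linarith
  have hξpos : (0:ℝ) ≤ ξ := le_of_lt hξ0
  have hℓξ0 : (0:ℝ) ≤ (ℓ:ℝ) * ξ := by positivity
  have habsc : |c| = (ℓ:ℝ) * ((ℓ - 1).choose s : ℝ) := by
    rw [hc, abs_neg, abs_of_nonneg (by positivity)]
  have key : ∀ i ∈ range (s + 2),
      |c| * (((s + 1).choose i : ℝ) * |iteratedDeriv i f ξ| * |iteratedDeriv (s + 1 - i) g ξ|)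
        ≤ ((s + 1).choose i : ℝ) * (ℓ:ℝ) ^ (s + 2) := by
    intro i hi
    rw [Finset.mem_range] at hi
    have hiDf : |iteratedDeriv i f ξ| = (s.descFactorial i : ℝ) * ξ ^ (s - i) := by
      rw [hf, iterDerivPow, abs_mul, Nat.abs_cast, abs_pow, abs_of_pos hξ0]
    by_cases his : i ≤ s
    · -- main case
      have hiDg : |iteratedDeriv (s + 1 - i) g ξ| ≤ (ℓ:ℝ) ^ (s + 1 - i) := by
        rw [hg, iterDerivOneSubPow]
        have h1 : ((ℓ - 1 - s).descFactorial (s + 1 - i) : ℝ) ≤ (ℓ:ℝ) ^ (s + 1 - i) := by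
          have : (ℓ - 1 - s).descFactorial (s + 1 - i) ≤ ℓ ^ (s + 1 - i) :=
            le_trans (Nat.descFactorial_le_pow _ _) (Nat.pow_le_pow_left (by omega) _)
          exact_mod_cast this
        calc ((ℓ - 1 - s).descFactorial (s + 1 - i) : ℝ) * |1 - ξ| ^ (ℓ - 1 - s - (s + 1 - i))
            ≤ ((ℓ - 1 - s).descFactorial (s + 1 - i) : ℝ) * 1 := by
              refine mul_le_mul_of_nonneg_left ?_ (by positivity)
              exact pow_le_one₀ (abs_nonneg _) hone
          _ ≤ (ℓ:ℝ) ^ (s + 1 - i) := by rw [mul_one]; exact h1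
      -- core bound
      have hfact : (1:ℝ) ≤ ((s - i).factorial : ℝ) := by
        exact_mod_cast Nat.one_le_iff_ne_zero.mpr (Nat.factorial_ne_zero _)
      have hidnat : (ℓ - 1).choose s * s.descFactorial i * (s - i).factorial
          = (ℓ - 1).descFactorial s := by
        have h2 : s.descFactorial i * (s - i).factorial = s.factorial := by
          rw [mul_comm]; exact Nat.factorial_mul_descFactorial his
        rw [mul_assoc, h2, mul_comm]
        exact (Nat.descFactorial_eq_factorial_mul_choose _ _).symm
      have hid : ((ℓ - 1).choose s : ℝ) * (s.descFactorial i : ℝ) * ((s - i).factorial : ℝ)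
          = ((ℓ - 1).descFactorial s : ℝ) := by exact_mod_cast congrArg Nat.cast hidnat
      have hdFs : ((ℓ - 1).descFactorial s : ℝ) ≤ (ℓ:ℝ) ^ s := by
        have : (ℓ - 1).descFactorial s ≤ ℓ ^ s :=
          le_trans (Nat.descFactorial_le_pow _ _) (Nat.pow_le_pow_left (by omega) _)
        exact_mod_cast this
      have hA : (0:ℝ) ≤ ξ ^ (s - i) * (ℓ:ℝ) ^ (s + 1 - i) := by positivity
      have hCD : (0:ℝ) ≤ ((ℓ - 1).choose s : ℝ) * (s.descFactorial i : ℝ) := by positivity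
      have hexp : s + (s + 1 - i) = (s - i) + (s + 1) := by omega
      have core : ((ℓ - 1).choose s : ℝ) * ((s.descFactorial i : ℝ) * ξ ^ (s - i))
          * (ℓ:ℝ) ^ (s + 1 - i) ≤ (ℓ:ℝ) ^ (s + 1) := by
        calc ((ℓ - 1).choose s : ℝ) * ((s.descFactorial i : ℝ) * ξ ^ (s - i)) * (ℓ:ℝ) ^ (s + 1 - i)
            = (((ℓ - 1).choose s : ℝ) * (s.descFactorial i : ℝ))
              * (ξ ^ (s - i) * (ℓ:ℝ) ^ (s + 1 - i)) := by ring
          _ ≤ ((((ℓ - 1).choose s : ℝ) * (s.descFactorial i : ℝ)) * ((s - i).factorial : ℝ))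
              * (ξ ^ (s - i) * (ℓ:ℝ) ^ (s + 1 - i)) :=
              mul_le_mul_of_nonneg_right (le_mul_of_one_le_right hCD hfact) hA
          _ = ((ℓ - 1).descFactorial s : ℝ) * (ξ ^ (s - i) * (ℓ:ℝ) ^ (s + 1 - i)) := by rw [hid]
          _ ≤ (ℓ:ℝ) ^ s * (ξ ^ (s - i) * (ℓ:ℝ) ^ (s + 1 - i)) :=
              mul_le_mul_of_nonneg_right hdFs hA
          _ = ((ℓ:ℝ) * ξ) ^ (s - i) * (ℓ:ℝ) ^ (s + 1) := by
              rw [mul_pow,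
                show (ℓ:ℝ) ^ s * (ξ ^ (s - i) * (ℓ:ℝ) ^ (s + 1 - i))
                  = ξ ^ (s - i) * ((ℓ:ℝ) ^ s * (ℓ:ℝ) ^ (s + 1 - i)) from by ring,
                ← pow_add, hexp, pow_add]
              ring
          _ ≤ 1 * (ℓ:ℝ) ^ (s + 1) := by
              refine mul_le_mul_of_nonneg_right ?_ (by positivity)
              exact pow_le_one₀ hℓξ0 hℓξ.le
          _ = (ℓ:ℝ) ^ (s + 1) := one_mul _
      calc |c| * (((s + 1).choose i : ℝ) * |iteratedDeriv i f ξ| * |iteratedDeriv (s + 1 - i) g ξ|)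
          ≤ |c| * (((s + 1).choose i : ℝ) * |iteratedDeriv i f ξ| * (ℓ:ℝ) ^ (s + 1 - i)) := by
            refine mul_le_mul_of_nonneg_left ?_ (abs_nonneg _)
            exact mul_le_mul_of_nonneg_left hiDg (by positivity)
        _ = ((s + 1).choose i : ℝ) * ((ℓ:ℝ) *
              (((ℓ - 1).choose s : ℝ) * ((s.descFactorial i : ℝ) * ξ ^ (s - i))
                * (ℓ:ℝ) ^ (s + 1 - i))) := by rw [habsc, hiDf]; ring
        _ ≤ ((s + 1).choose i : ℝ) * ((ℓ:ℝ) * (ℓ:ℝ) ^ (s + 1)) := by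
            refine mul_le_mul_of_nonneg_left ?_ (by positivity)
            exact mul_le_mul_of_nonneg_left core (by positivity)
        _ = ((s + 1).choose i : ℝ) * (ℓ:ℝ) ^ (s + 2) := by rw [← pow_succ']
    · -- i = s + 1 : the descFactorial vanishes
      have hi' : i = s + 1 := by omega
      have hz : (s.descFactorial i : ℝ) = 0 := by
        have : s.descFactorial i = 0 := Nat.descFactorial_eq_zero_iff_lt.mpr (by omega)
        exact_mod_cast this
      rw [hiDf, hz, zero_mul, mul_zero, zero_mul, mul_zero]
      positivity
  have hsum : (∑ i ∈ range (s + 2), ((s + 1).choose i : ℝ)) = 2 ^ (s + 1) := by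
    rw [← Nat.cast_sum, Nat.sum_range_choose]
    push_cast; ring
  calc |c| * |iteratedDeriv (s + 1) (fun x => f x * g x) ξ|
      ≤ |c| * ∑ i ∈ range (s + 2), ((s + 1).choose i : ℝ) *
          |iteratedDeriv i f ξ| * |iteratedDeriv (s + 1 - i) g ξ| :=
        mul_le_mul_of_nonneg_left leib (abs_nonneg _)
    _ = ∑ i ∈ range (s + 2), |c| * (((s + 1).choose i : ℝ) *
          |iteratedDeriv i f ξ| * |iteratedDeriv (s + 1 - i) g ξ|) := Finset.mul_sum _ _ _
    _ ≤ ∑ i ∈ range (s + 2), ((s + 1).choose i : ℝ) * (ℓ:ℝ) ^ (s + 2) :=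
        Finset.sum_le_sum key
    _ = (∑ i ∈ range (s + 2), ((s + 1).choose i : ℝ)) * (ℓ:ℝ) ^ (s + 2) := by
        rw [← Finset.sum_mul]
    _ = 2 ^ (s + 1) * (ℓ:ℝ) ^ (s + 2) := by rw [hsum]
    _ = (ℓ:ℝ) ^ (s + 1 + 1) * 2 ^ (s + 1) := by ring
end
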